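/- Let m, r, ξ, and i be positive reals (i ≥ 1). Then for every n ≥ e^m, we have n^ξ · (r log i)^{ξ m} / (i^r + n)^ξ ≤ (log n)^{ξ m}. -/

import Mathlib

/-- Lemma 9.4 (second inequality): for positive reals m, r, ξ and i ≥ 1, and n ≥ e^m,
n^ξ (r log i)^{ξ m} / (i^r + n)^ξ ≤ (log n)^{ξ m}. -/
theorem stmt_6 (m r ξ i n : ℝ) (hm : 0 < m) (hr : 0 < r) (hξ : 0 < ξ) (hi : 1 ≤ i)
    (hn : Real.exp m ≤ n) :
    n ^ ξ * (r * Real.log i) ^ (ξ * m) / (i ^ r + n) ^ ξ ≤ Real.log n ^ (ξ * m) := by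
  have hn0 : 0 < n := lt_of_lt_of_le (Real.exp_pos m) hn
  have hi0 : (0:ℝ) < i := lt_of_lt_of_le one_pos hi
  have ha : m ≤ Real.log n := (Real.le_log_iff_exp_le hn0).mpr hn
  have ha0 : 0 < Real.log n := lt_of_lt_of_le hm ha
  have hb0 : 0 ≤ r * Real.log i := mul_nonneg hr.le (Real.log_nonneg hi)
  have hir : (0:ℝ) < i ^ r := Real.rpow_pos_of_pos hi0 r
  have hden : 0 < (i ^ r + n) ^ ξ := Real.rpow_pos_of_pos (by positivity) ξ
  rw [div_le_iff₀ hden]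
  rcases le_or_gt (r * Real.log i) (Real.log n) with h | h
  · have h1 : (r * Real.log i) ^ (ξ*m) ≤ (Real.log n) ^ (ξ*m) :=
      Real.rpow_le_rpow hb0 h (by positivity)
    have h2 : n ^ ξ ≤ (i^r + n) ^ ξ :=
      Real.rpow_le_rpow hn0.le (by linarith) hξ.le
    calc n ^ ξ * (r * Real.log i) ^ (ξ*m)
        ≤ (i^r + n) ^ ξ * (Real.log n) ^ (ξ*m) :=
          mul_le_mul h2 h1 (Real.rpow_nonneg hb0 _) hden.le
      _ = Real.log n ^ (ξ*m) * (i^r + n) ^ ξ := mul_comm _ _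
  · set a := Real.log n with hadef
    set b := r * Real.log i with hbdef
    have hb0' : 0 < b := lt_trans ha0 h
    -- key inequality: a + m*(log b - log a) ≤ b
    have hkey : a + m * (Real.log b - Real.log a) ≤ b := by
      have hlog : Real.log b - Real.log a = Real.log (b / a) :=
        (Real.log_div hb0'.ne' ha0.ne').symm
      have h1 : Real.log (b / a) ≤ b / a - 1 :=
        Real.log_le_sub_one_of_pos (by positivity)
      have h2 : 0 ≤ Real.log (b / a) :=
        Real.log_nonneg ((le_div_iff₀ ha0).mpr (by linarith))
      have h3 : a * (b / a) = b := mul_div_cancel₀ b ha0.ne'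
      rw [hlog]
      nlinarith [mul_le_mul_of_nonneg_right ha h2,
        mul_le_mul_of_nonneg_left h1 ha0.le]
    -- rewrite everything with exp
    have e1 : n ^ ξ = Real.exp (a * ξ) := by
      rw [Real.rpow_def_of_pos hn0]
    have e2 : b ^ (ξ*m) = Real.exp (Real.log b * (ξ*m)) := by
      rw [Real.rpow_def_of_pos hb0']
    have e3 : a ^ (ξ*m) = Real.exp (Real.log a * (ξ*m)) := by
      rw [Real.rpow_def_of_pos ha0]
    have e4 : (i ^ r : ℝ) ^ ξ = Real.exp (b * ξ) := by
      rw [← Real.rpow_mul hi0.le, Real.rpow_def_of_pos hi0, hbdef]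
      ring_nf
    have h5 : (i ^ r : ℝ) ^ ξ ≤ (i ^ r + n) ^ ξ :=
      Real.rpow_le_rpow hir.le (by linarith) hξ.le
    calc n ^ ξ * b ^ (ξ*m)
        ≤ Real.exp (Real.log a * (ξ*m)) * Real.exp (b * ξ) := by
          rw [e1, e2, ← Real.exp_add, ← Real.exp_add]
          apply Real.exp_le_exp.mpr
          nlinarith [mul_le_mul_of_nonneg_left hkey hξ.le]
      _ = a ^ (ξ*m) * (i ^ r) ^ ξ := by rw [e3, e4]
      _ ≤ a ^ (ξ*m) * (i ^ r + n) ^ ξ :=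
          mul_le_mul_of_nonneg_left h5 (Real.rpow_nonneg ha0.le _)
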